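/- Let ÷ be an AGM contraction operator with contraction-compatible faithful assignment Ψ ↦ ≤_Ψ. Then ÷ satisfies (IC4_sa): if Ψ ÷ α ÷ β ⊨ ¬α then Ψ ÷ β ⊨ ¬α, if and only if the assignment satisfies: whenever ω₁ ⊨ ¬α, ω₂ ⊨ α, and [[Ψ]] ⊆ [[¬α]], then ω₁ <_{Ψ÷α} ω₂ implies ω₁ <_Ψ ω₂. -/

import Mathlib

inductive Form (V : Type) : Type
  | var : V → Form V
  | falsum : Form V
  | imp : Form V → Form V → Form V

namespace Form

def eval {V : Type} (w : V → Bool) : Form V → Bool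
  | var v => w v
  | falsum => false
  | imp a b => !(eval w a) || eval w b

def neg {V : Type} (a : Form V) : Form V := imp a falsum

def top {V : Type} : Form V := neg falsum

def conj {V : Type} (a b : Form V) : Form V := neg (imp a (neg b))

end Form

/-- Worlds (propositional interpretations) over the signature `V`. -/
abbrev World (V : Type) := V → Bool

/-- Models of a single formula. -/
def FMod {V : Type} (a : Form V) : Set (World V) := {w | a.eval w = true}

/-- Models of a set of formulas. -/
def SMod {V : Type} (X : Set (Form V)) : Set (World V) := {w | ∀ a ∈ X, a.eval w = true}

/-- Deductive closure (consequence operator). -/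
def Cn {V : Type} (X : Set (Form V)) : Set (Form V) := {b | ∀ w ∈ SMod X, b.eval w = true}

/-- Minimal elements of a set of worlds w.r.t. a relation. -/
def minSet {V : Type} (S : Set (World V)) (r : World V → World V → Prop) : Set (World V) :=
  {w ∈ S | ∀ w' ∈ S, r w w'}

/-- Total preorder: total (hence reflexive) and transitive. -/
def TotalPre {V : Type} (r : World V → World V → Prop) : Prop :=
  (∀ x y, r x y ∨ r y x) ∧ (∀ x y z, r x y → r y z → r x z)

/-- A belief change operator over epistemic states `E`: each state has a
deductively closed belief set, and the operator maps a state and a formula to a state. -/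
structure BCO (V E : Type) where
  Bel : E → Set (Form V)
  closed : ∀ Ψ, Cn (Bel Ψ) = Bel Ψ
  op : E → Form V → E

/-- Models of (the belief set of) an epistemic state. -/
def stMod {V E : Type} (O : BCO V E) (Ψ : E) : Set (World V) := SMod (O.Bel Ψ)

/-- Faithful assignment: each `le Ψ` is a total preorder; models of `Ψ` are mutually
equivalent and strictly below non-models. -/
def Faithful {V E : Type} (O : BCO V E) (le : E → World V → World V → Prop) : Prop :=
  (∀ Ψ, TotalPre (le Ψ)) ∧
  (∀ Ψ w₁ w₂, w₁ ∈ stMod O Ψ → w₂ ∈ stMod O Ψ → le Ψ w₁ w₂) ∧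
  (∀ Ψ w₁ w₂, w₁ ∈ stMod O Ψ → w₂ ∉ stMod O Ψ → (le Ψ w₁ w₂ ∧ ¬ le Ψ w₂ w₁))

/-- Contraction-compatibility: `[[Ψ ÷ α]] = [[Ψ]] ∪ min([[¬α]], ≤_Ψ)`. -/
def ContrCompat {V E : Type} (O : BCO V E) (le : E → World V → World V → Prop) : Prop :=
  ∀ Ψ (α : Form V), stMod O (O.op Ψ α) = stMod O Ψ ∪ minSet (FMod α.neg) (le Ψ)

/-- Revision-compatibility: `[[Ψ * α]] = min([[α]], ≤_Ψ)`. -/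
def RevCompat {V E : Type} (O : BCO V E) (le : E → World V → World V → Prop) : Prop :=
  ∀ Ψ (α : Form V), stMod O (O.op Ψ α) = minSet (FMod α) (le Ψ)

/-- The AGM contraction postulates (C1)–(C7) for epistemic states. -/
def AGMContr {V E : Type} (O : BCO V E) : Prop :=
  (∀ Ψ α, O.Bel (O.op Ψ α) ⊆ O.Bel Ψ) ∧
  (∀ Ψ α, α ∉ O.Bel Ψ → O.Bel Ψ ⊆ O.Bel (O.op Ψ α)) ∧
  (∀ Ψ (α : Form V), ¬ (∀ w, w ∈ FMod α) → α ∉ O.Bel (O.op Ψ α)) ∧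
  (∀ Ψ α, O.Bel Ψ ⊆ Cn (O.Bel (O.op Ψ α) ∪ {α})) ∧
  (∀ Ψ α β, FMod α = FMod β → O.Bel (O.op Ψ α) = O.Bel (O.op Ψ β)) ∧
  (∀ Ψ (α β : Form V), O.Bel (O.op Ψ α) ∩ O.Bel (O.op Ψ β) ⊆ O.Bel (O.op Ψ (α.conj β))) ∧
  (∀ Ψ (α β : Form V), β ∉ O.Bel (O.op Ψ (α.conj β)) → O.Bel (O.op Ψ (α.conj β)) ⊆ O.Bel (O.op Ψ β))

/-- Unbiasedness: every consistent set of formulas has an epistemic state whose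
belief set is its deductive closure. -/
def Unbiased {V E : Type} (O : BCO V E) : Prop :=
  ∀ L : Set (Form V), (SMod L).Nonempty → ∃ Ψ : E, O.Bel Ψ = Cn L


section Helpers

open Classical

lemma eval_neg {V : Type} (a : Form V) (w : World V) :
    a.neg.eval w = !a.eval w := by
  simp [Form.neg, Form.eval]

lemma mem_FMod_neg {V : Type} (a : Form V) (w : World V) :
    w ∈ FMod a.neg ↔ a.eval w = false := by
  simp [FMod, eval_neg]

lemma mem_Bel_iff {V E : Type} (O : BCO V E) (Ψ : E) (φ : Form V) :
    φ ∈ O.Bel Ψ ↔ stMod O Ψ ⊆ FMod φ := by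
  constructor
  · intro h w hw
    exact hw φ h
  · intro h
    rw [← O.closed Ψ]
    intro w hw
    exact h hw

/-- a literal describing the value of `w` at `v` -/
def lit {V : Type} (w : World V) (v : V) : Form V :=
  if w v then Form.var v else (Form.var v).neg

lemma eval_lit {V : Type} (w w' : World V) (v : V) :
    (lit w v).eval w' = true ↔ w' v = w v := by
  unfold lit
  by_cases h : w v <;> simp [h, Form.eval, eval_neg]

def conjList {V : Type} : List V → World V → Form V
  | [], _ => Form.top
  | v :: vs, w => (lit w v).conj (conjList vs w)

lemma eval_conj {V : Type} (a b : Form V) (w : World V) :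
    (a.conj b).eval w = (a.eval w && b.eval w) := by
  simp [Form.conj, Form.neg, Form.eval]

lemma eval_conjList {V : Type} (l : List V) (w w' : World V) :
    (conjList l w).eval w' = true ↔ ∀ v ∈ l, w' v = w v := by
  induction l with
  | nil => simp [conjList, Form.top, Form.neg, Form.eval]
  | cons v vs ih =>
      simp [conjList, eval_conj, Bool.and_eq_true, ih, eval_lit]

/-- a formula whose unique model is `w` -/
noncomputable def formOf {V : Type} [Fintype V] (w : World V) : Form V :=
  conjList (Finset.univ.toList) w

lemma FMod_formOf {V : Type} [Fintype V] (w : World V) :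
    FMod (formOf w) = {w} := by
  ext w'
  simp only [FMod, Set.mem_setOf_eq, Set.mem_singleton_iff, formOf, eval_conjList]
  constructor
  · intro h; funext v; exact h v (by simp)
  · intro h v _; rw [h]

def disj {V : Type} (a b : Form V) : Form V := Form.imp a.neg b

lemma eval_disj {V : Type} (a b : Form V) (w : World V) :
    (disj a b).eval w = (a.eval w || b.eval w) := by
  simp [disj, Form.eval, eval_neg]

/-- the key pair formula: `¬β` has exactly the models `ω₁, ω₂` -/
noncomputable def pairForm {V : Type} [Fintype V] (ω₁ ω₂ : World V) : Form V :=
  (disj (formOf ω₁) (formOf ω₂)).neg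

lemma FMod_pairForm_neg {V : Type} [Fintype V] (ω₁ ω₂ : World V) :
    FMod (pairForm ω₁ ω₂).neg = {ω₁, ω₂} := by
  ext w
  have h1 := FMod_formOf ω₁
  have h2 := FMod_formOf ω₂
  simp only [FMod, Set.ext_iff, Set.mem_setOf_eq, Set.mem_singleton_iff] at h1 h2
  simp [FMod, pairForm, eval_neg, eval_disj, h1 w, h2 w, Set.mem_insert_iff]

lemma exists_min_finset {α : Type*} (r : α → α → Prop)
    (htot : ∀ x y, r x y ∨ r y x) (htr : ∀ x y z, r x y → r y z → r x z)
    (s : Finset α) (hs : s.Nonempty) : ∃ m ∈ s, ∀ x ∈ s, r m x := by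
  classical
  induction s using Finset.induction with
  | empty => exact absurd hs (by simp)
  | insert a s ha ih =>
      rcases s.eq_empty_or_nonempty with rfl | hs'
      · refine ⟨a, by simp, ?_⟩
        intro x hx
        simp at hx; subst hx
        rcases htot x x with h | h <;> exact h
      · obtain ⟨m, hm, hmin⟩ := ih hs'
        rcases htot m a with h | h
        · refine ⟨m, Finset.mem_insert_of_mem hm, ?_⟩
          intro x hx
          rcases Finset.mem_insert.mp hx with rfl | hx
          · exact h
          · exact hmin x hx
        · refine ⟨a, Finset.mem_insert_self a s, ?_⟩
          intro x hx
          rcases Finset.mem_insert.mp hx with rfl | hx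
          · rcases htot x x with h' | h' <;> exact h'
          · exact htr a m x h (hmin x hx)

lemma exists_min_set {V : Type} [Fintype V] (r : World V → World V → Prop)
    (htot : ∀ x y, r x y ∨ r y x) (htr : ∀ x y z, r x y → r y z → r x z)
    (S : Set (World V)) (hS : S.Nonempty) : ∃ m ∈ S, ∀ x ∈ S, r m x := by
  classical
  have hfin : S.Finite := Set.toFinite S
  obtain ⟨m, hm, hmin⟩ := exists_min_finset r htot htr hfin.toFinset
    (by rwa [Set.Finite.toFinset_nonempty])
  exact ⟨m, hfin.mem_toFinset.mp hm, fun x hx => hmin x (hfin.mem_toFinset.mpr hx)⟩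

end Helpers

/-- (IC4_sa) holds iff the assignment satisfies (IC4ʳᵉˡ_weak). -/
theorem stmt_13 {V E : Type} [Fintype V] (O : BCO V E)
    (le : E → World V → World V → Prop)
    (hA : AGMContr O) (hF : Faithful O le) (hC : ContrCompat O le) :
    (∀ (Ψ : E) (α β : Form V),
        α.neg ∈ O.Bel (O.op (O.op Ψ α) β) → α.neg ∈ O.Bel (O.op Ψ β)) ↔
    (∀ (Ψ : E) (α : Form V) (ω₁ ω₂ : World V),
        ω₁ ∈ FMod α.neg → ω₂ ∈ FMod α → stMod O Ψ ⊆ FMod α.neg →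
          (le (O.op Ψ α) ω₁ ω₂ ∧ ¬ le (O.op Ψ α) ω₂ ω₁) →
            (le Ψ ω₁ ω₂ ∧ ¬ le Ψ ω₂ ω₁)) := by
  constructor
  · -- (IC4_sa) → relational condition
    intro hIC Ψ α ω₁ ω₂ h1 h2 hsub hlt
    obtain ⟨htp, -, -⟩ := hF
    have htotA := (htp (O.op Ψ α)).1
    have htotΨ := (htp Ψ).1
    set β : Form V := pairForm ω₁ ω₂ with hβ
    have hpair : FMod β.neg = {ω₁, ω₂} := FMod_pairForm_neg ω₁ ω₂
    -- show the hypothesis of IC4_sa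
    have hmin : minSet (FMod β.neg) (le (O.op Ψ α)) = {ω₁} := by
      ext w
      simp only [minSet, hpair, Set.mem_setOf_eq, Set.mem_insert_iff,
        Set.mem_singleton_iff]
      constructor
      · rintro ⟨rfl | rfl, hall⟩
        · rfl
        · exact absurd (hall ω₁ (Or.inl rfl)) hlt.2
      · rintro rfl
        refine ⟨Or.inl rfl, ?_⟩
        rintro x (rfl | rfl)
        · rcases htotA x x with h | h <;> exact h
        · exact hlt.1
    have hpre : α.neg ∈ O.Bel (O.op (O.op Ψ α) β) := by
      rw [mem_Bel_iff, hC, hmin, hC]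
      rintro w ((hw | hw) | hw)
      · exact hsub hw
      · exact hw.1
      · rcases hw with rfl; exact h1
    have hpost := hIC Ψ α β hpre
    rw [mem_Bel_iff, hC] at hpost
    -- ω₂ is not minimal in {ω₁, ω₂} for ≤_Ψ
    have hω₂ : ω₂ ∉ minSet (FMod β.neg) (le Ψ) := by
      intro hmem
      have := hpost (Or.inr hmem)
      rw [mem_FMod_neg] at this
      simp [FMod, Set.mem_setOf_eq] at h2
      rw [h2] at this; exact absurd this (by simp)
    have hnle : ¬ le Ψ ω₂ ω₁ := by
      intro hle
      apply hω₂
      refine ⟨by rw [hpair]; exact Or.inr rfl, ?_⟩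
      rintro x hx
      rw [hpair] at hx
      rcases hx with rfl | rfl
      · exact hle
      · rcases htotΨ x x with h | h <;> exact h
    refine ⟨?_, hnle⟩
    rcases htotΨ ω₁ ω₂ with h | h
    · exact h
    · exact absurd h hnle
  · -- relational condition → (IC4_sa)
    intro hR Ψ α β hpre
    obtain ⟨htp, _, _⟩ := hF
    obtain ⟨htot, htr⟩ := htp (O.op Ψ α)
    obtain ⟨htotΨ, htrΨ⟩ := htp Ψ
    rw [mem_Bel_iff, hC, hC] at hpre
    have hΨsub : stMod O Ψ ⊆ FMod α.neg := fun w hw =>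
      hpre (Or.inl (Or.inl hw))
    rw [mem_Bel_iff, hC]
    rintro ω (hw | hw)
    · exact hΨsub hw
    · by_contra hωα
      rw [mem_FMod_neg] at hωα
      have hωα' : ω ∈ FMod α := by
        simp only [FMod, Set.mem_setOf_eq]
        cases h : α.eval ω
        · exact absurd h hωα
        · rfl
      -- pick a minimum of [[¬β]] under ≤_{Ψ÷α}
      have hne : (FMod β.neg).Nonempty := ⟨ω, hw.1⟩
      obtain ⟨ω', hω', hmin'⟩ := exists_min_set (le (O.op Ψ α)) htot htr _ hne
      have hω'mem : ω' ∈ stMod O (O.op (O.op Ψ α) β) := by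
        rw [hC]; exact Or.inr ⟨hω', hmin'⟩
      have hω'α : ω' ∈ FMod α.neg := hpre (by rw [hC, hC] at hω'mem; exact hω'mem)
      -- ω' is not strictly below ω in ≤_{Ψ÷α}
      have hnotlt : ¬ (le (O.op Ψ α) ω' ω ∧ ¬ le (O.op Ψ α) ω ω') := by
        intro hlt
        have := hR Ψ α ω' ω hω'α hωα' hΨsub hlt
        exact this.2 (hw.2 ω' hω')
      have hle : le (O.op Ψ α) ω ω' := by
        rcases htot ω ω' with h | h
        · exact h
        · by_contra h'
          exact hnotlt ⟨h, h'⟩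
      have : ω ∈ minSet (FMod β.neg) (le (O.op Ψ α)) :=
        ⟨hw.1, fun x hx => htr _ _ _ hle (hmin' x hx)⟩
      have : ω ∈ FMod α.neg := hpre (Or.inr this)
      rw [mem_FMod_neg] at this
      exact hωα this
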